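/- For i = 1,2 set A^i = (x^i)² + 2x^iy^i − (y^i)² and B^i = (y^i)² + 2x^iy^i − (x^i)². On the domain D = {(x¹,x²,y¹,y²) ∈ ℝ⁴ : x¹ + y¹ ≠ 0, x² + y² ≠ 0, A¹ ≠ 0, A² ≠ 0, B¹ ≠ 0, B² ≠ 0}, consider the web function f¹ = ((x¹)² + (y¹)²)/(x¹ + y¹), f² = ((x²)² + (y²)²)/(x² + y²). Then the Jacobian matrices f̄ and f̃ are the invertible diagonal matrices with diagonal entries A^i/(x^i + y^i)² and B^i/(x^i + y^i)² respectively, and the connection coefficients are: Γ¹₁₁ = 4x¹y¹(x¹ + y¹)/(A¹B¹), Γ²₂₂ = 4x²y²(x² + y²)/(A²B²), and Γ^i_{jk} = 0 for all other index triples; in particular the torsion tensor vanishes. -/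

import Mathlib

open Filter Topology

noncomputable section

/-- Points of ℝ⁴ with coordinates (x¹, x², y¹, y²). -/
abbrev Pt : Type := ℝ × ℝ × ℝ × ℝ

/-- Partial derivative with respect to x^j (j = 0 ↦ x¹, j = 1 ↦ x²). -/
def pdx (j : Fin 2) (F : Pt → ℝ) (p : Pt) : ℝ :=
  if j = 0 then deriv (fun t => F (t, p.2.1, p.2.2.1, p.2.2.2)) p.1
  else deriv (fun t => F (p.1, t, p.2.2.1, p.2.2.2)) p.2.1

/-- Partial derivative with respect to y^k (k = 0 ↦ y¹, k = 1 ↦ y²). -/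
def pdy (k : Fin 2) (F : Pt → ℝ) (p : Pt) : ℝ :=
  if k = 0 then deriv (fun t => F (p.1, p.2.1, t, p.2.2.2)) p.2.2.1
  else deriv (fun t => F (p.1, p.2.1, p.2.2.1, t)) p.2.2.2

/-- Jacobian matrix f̄ with entries f̄^i_j = ∂f^i/∂x^j. -/
def fbar (f : Fin 2 → Pt → ℝ) (p : Pt) : Matrix (Fin 2) (Fin 2) ℝ :=
  Matrix.of fun i j => pdx j (f i) p

/-- Jacobian matrix f̃ with entries f̃^i_k = ∂f^i/∂y^k. -/
def ftil (f : Fin 2 → Pt → ℝ) (p : Pt) : Matrix (Fin 2) (Fin 2) ℝ :=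
  Matrix.of fun i k => pdy k (f i) p

/-- Connection coefficients Γ^i_{jk} = −Σ_{l,m} (∂²f^i/∂x^l∂y^m) ḡ^l_j g̃^m_k,
where ḡ = f̄⁻¹ and g̃ = f̃⁻¹. -/
def Gam (f : Fin 2 → Pt → ℝ) (i j k : Fin 2) (p : Pt) : ℝ :=
  - ∑ l : Fin 2, ∑ m : Fin 2,
      pdy m (pdx l (f i)) p * (fbar f p)⁻¹ l j * (ftil f p)⁻¹ m k

/-- Torsion tensor a^i_{jk} = (Γ^i_{jk} − Γ^i_{kj})/2. -/
def tors (f : Fin 2 → Pt → ℝ) (i j k : Fin 2) (p : Pt) : ℝ :=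
  (Gam f i j k p - Gam f i k j p) / 2

/-- The web function: f¹ = ((x¹)² + (y¹)²)/(x¹ + y¹), f² = ((x²)² + (y²)²)/(x² + y²). -/
def w : Fin 2 → Pt → ℝ :=
  ![fun p => (p.1 ^ 2 + p.2.2.1 ^ 2) / (p.1 + p.2.2.1), fun p => (p.2.1 ^ 2 + p.2.2.2 ^ 2) / (p.2.1 + p.2.2.2)]

lemma hd1 (a b : ℝ) (h : a + b ≠ 0) :
    HasDerivAt (fun t : ℝ => (t ^ 2 + b ^ 2) / (t + b))
      ((a ^ 2 + 2 * a * b - b ^ 2) / (a + b) ^ 2) a := by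
  have h1 : HasDerivAt (fun t : ℝ => t ^ 2 + b ^ 2) (2 * a) a := by
    simpa using (hasDerivAt_pow 2 a).add_const (b ^ 2)
  have h2 : HasDerivAt (fun t : ℝ => t + b) 1 a := (hasDerivAt_id a).add_const b
  have := h1.div h2 h
  exact this.congr_deriv (by ring)

lemma hd2 (a b : ℝ) (h : a + b ≠ 0) :
    HasDerivAt (fun t : ℝ => (a ^ 2 + t ^ 2) / (a + t))
      ((b ^ 2 + 2 * a * b - a ^ 2) / (a + b) ^ 2) b := by
  have h1 : HasDerivAt (fun t : ℝ => a ^ 2 + t ^ 2) (2 * b) b := by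
    simpa using ((hasDerivAt_pow 2 b).const_add (a ^ 2))
  have h2 : HasDerivAt (fun t : ℝ => a + t) 1 b := (hasDerivAt_id b).const_add a
  have := h1.div h2 h
  exact this.congr_deriv (by ring)

lemma hdd (a b : ℝ) (h : a + b ≠ 0) :
    deriv (fun t : ℝ => deriv (fun s : ℝ => (s ^ 2 + t ^ 2) / (s + t)) a) b
      = -(4 * a * b) / (a + b) ^ 3 := by
  have hev : (fun t : ℝ => deriv (fun s : ℝ => (s ^ 2 + t ^ 2) / (s + t)) a) =ᶠ[𝓝 b]
      (fun t => (a ^ 2 + 2 * a * t - t ^ 2) / (a + t) ^ 2) := by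
    have hc : ContinuousAt (fun t : ℝ => a + t) b := by fun_prop
    filter_upwards [hc.eventually_ne h] with t ht
    exact (hd1 a t ht).deriv
  rw [hev.deriv_eq]
  have hN : HasDerivAt (fun t : ℝ => a ^ 2 + 2 * a * t - t ^ 2) (2 * a - 2 * b) b := by
    have : HasDerivAt (fun t : ℝ => a ^ 2 + 2 * a * t) (2 * a) b := by
      simpa using ((hasDerivAt_id b).const_mul (2 * a)).const_add (a ^ 2)
    exact this.sub (by simpa using hasDerivAt_pow 2 b : HasDerivAt (fun t : ℝ => t ^ 2) (2 * b) b)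
  have hD : HasDerivAt (fun t : ℝ => (a + t) ^ 2) (2 * (a + b)) b := by
    have := ((hasDerivAt_id b).const_add a).pow 2
    exact this.congr_deriv (by simp only [id, Nat.cast_ofNat]; ring)
  have hD0 : (a + b) ^ 2 ≠ 0 := pow_ne_zero _ h
  rw [show (fun t => (a ^ 2 + 2 * a * t - t ^ 2) / (a + t) ^ 2) = (fun t => a ^ 2 + 2 * a * t - t ^ 2) / (fun t => (a + t) ^ 2) from rfl, (hN.div hD hD0).deriv]
  field_simp
  ring

theorem stmt_16 (x1 x2 y1 y2 : ℝ) (h1 : x1 + y1 ≠ 0) (h2 : x2 + y2 ≠ 0)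
    (hA1 : x1 ^ 2 + 2 * x1 * y1 - y1 ^ 2 ≠ 0) (hA2 : x2 ^ 2 + 2 * x2 * y2 - y2 ^ 2 ≠ 0)
    (hB1 : y1 ^ 2 + 2 * x1 * y1 - x1 ^ 2 ≠ 0) (hB2 : y2 ^ 2 + 2 * x2 * y2 - x2 ^ 2 ≠ 0) :
    fbar w (x1, x2, y1, y2) = Matrix.diagonal
      ![(x1 ^ 2 + 2 * x1 * y1 - y1 ^ 2) / (x1 + y1) ^ 2,
        (x2 ^ 2 + 2 * x2 * y2 - y2 ^ 2) / (x2 + y2) ^ 2] ∧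
    ftil w (x1, x2, y1, y2) = Matrix.diagonal
      ![(y1 ^ 2 + 2 * x1 * y1 - x1 ^ 2) / (x1 + y1) ^ 2,
        (y2 ^ 2 + 2 * x2 * y2 - x2 ^ 2) / (x2 + y2) ^ 2] ∧
    IsUnit (fbar w (x1, x2, y1, y2)) ∧
    IsUnit (ftil w (x1, x2, y1, y2)) ∧
    Gam w 0 0 0 (x1, x2, y1, y2) = 4 * x1 * y1 * (x1 + y1)
      / ((x1 ^ 2 + 2 * x1 * y1 - y1 ^ 2) * (y1 ^ 2 + 2 * x1 * y1 - x1 ^ 2)) ∧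
    Gam w 1 1 1 (x1, x2, y1, y2) = 4 * x2 * y2 * (x2 + y2)
      / ((x2 ^ 2 + 2 * x2 * y2 - y2 ^ 2) * (y2 ^ 2 + 2 * x2 * y2 - x2 ^ 2)) ∧
    (∀ i j k : Fin 2, (i, j, k) ≠ (0, 0, 0) → (i, j, k) ≠ (1, 1, 1) →
      Gam w i j k (x1, x2, y1, y2) = 0) ∧
    (∀ i j k : Fin 2, tors w i j k (x1, x2, y1, y2) = 0) := by
  set p : Pt := (x1, x2, y1, y2) with hp
  -- first Jacobian entries
  have b00 : pdx 0 (w 0) p = (x1 ^ 2 + 2 * x1 * y1 - y1 ^ 2) / (x1 + y1) ^ 2 := by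
    show deriv (fun t => w 0 (t, x2, y1, y2)) x1 = _
    simp only [w, Matrix.cons_val_zero]
    exact (hd1 x1 y1 h1).deriv
  have b11 : pdx 1 (w 1) p = (x2 ^ 2 + 2 * x2 * y2 - y2 ^ 2) / (x2 + y2) ^ 2 := by
    show deriv (fun t => w 1 (x1, t, y1, y2)) x2 = _
    simp only [w, Matrix.cons_val_one, Matrix.head_cons]
    exact (hd1 x2 y2 h2).deriv
  have b01 : pdx 1 (w 0) p = 0 := by
    show deriv (fun t => w 0 (x1, t, y1, y2)) x2 = 0
    simp [w]
  have b10 : pdx 0 (w 1) p = 0 := by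
    show deriv (fun t => w 1 (t, x2, y1, y2)) x1 = 0
    simp [w]
  have t00 : pdy 0 (w 0) p = (y1 ^ 2 + 2 * x1 * y1 - x1 ^ 2) / (x1 + y1) ^ 2 := by
    show deriv (fun t => w 0 (x1, x2, t, y2)) y1 = _
    simp only [w, Matrix.cons_val_zero]
    exact (hd2 x1 y1 h1).deriv
  have t11 : pdy 1 (w 1) p = (y2 ^ 2 + 2 * x2 * y2 - x2 ^ 2) / (x2 + y2) ^ 2 := by
    show deriv (fun t => w 1 (x1, x2, y1, t)) y2 = _
    simp only [w, Matrix.cons_val_one, Matrix.head_cons]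
    exact (hd2 x2 y2 h2).deriv
  have t01 : pdy 1 (w 0) p = 0 := by
    show deriv (fun t => w 0 (x1, x2, y1, t)) y2 = 0
    simp [w]
  have t10 : pdy 0 (w 1) p = 0 := by
    show deriv (fun t => w 1 (x1, x2, t, y2)) y1 = 0
    simp [w]
  have hfb : fbar w p = Matrix.diagonal
      ![(x1 ^ 2 + 2 * x1 * y1 - y1 ^ 2) / (x1 + y1) ^ 2,
        (x2 ^ 2 + 2 * x2 * y2 - y2 ^ 2) / (x2 + y2) ^ 2] := by
    ext i j
    fin_cases i <;> fin_cases j <;>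
      simp [fbar, Matrix.diagonal, b00, b01, b10, b11]
  have hft : ftil w p = Matrix.diagonal
      ![(y1 ^ 2 + 2 * x1 * y1 - x1 ^ 2) / (x1 + y1) ^ 2,
        (y2 ^ 2 + 2 * x2 * y2 - x2 ^ 2) / (x2 + y2) ^ 2] := by
    ext i j
    fin_cases i <;> fin_cases j <;>
      simp [ftil, Matrix.diagonal, t00, t01, t10, t11]
  have hs1 : ((x1 + y1) ^ 2 : ℝ) ≠ 0 := pow_ne_zero _ h1
  have hs2 : ((x2 + y2) ^ 2 : ℝ) ≠ 0 := pow_ne_zero _ h2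
  have hub : IsUnit (fbar w p) := by
    rw [Matrix.isUnit_iff_isUnit_det, hfb, Matrix.det_diagonal, Fin.prod_univ_two,
      isUnit_iff_ne_zero]
    simp only [Matrix.cons_val_zero, Matrix.cons_val_one, Matrix.head_cons]
    exact mul_ne_zero (div_ne_zero hA1 hs1) (div_ne_zero hA2 hs2)
  have hut : IsUnit (ftil w p) := by
    rw [Matrix.isUnit_iff_isUnit_det, hft, Matrix.det_diagonal, Fin.prod_univ_two,
      isUnit_iff_ne_zero]
    simp only [Matrix.cons_val_zero, Matrix.cons_val_one, Matrix.head_cons]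
    exact mul_ne_zero (div_ne_zero hB1 hs1) (div_ne_zero hB2 hs2)
  -- inverses
  have hfbinv : (fbar w p)⁻¹ = Matrix.diagonal
      ![(x1 + y1) ^ 2 / (x1 ^ 2 + 2 * x1 * y1 - y1 ^ 2),
        (x2 + y2) ^ 2 / (x2 ^ 2 + 2 * x2 * y2 - y2 ^ 2)] := by
    rw [hfb]
    apply Matrix.inv_eq_right_inv
    rw [Matrix.diagonal_mul_diagonal]
    ext i j
    fin_cases i <;> fin_cases j <;>
      simp [Matrix.diagonal_apply, Matrix.one_apply] <;> field_simp <;>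
      exact div_self (by intro hc; first | exact hA1 (by linarith) | exact hA2 (by linarith))
  have hftinv : (ftil w p)⁻¹ = Matrix.diagonal
      ![(x1 + y1) ^ 2 / (y1 ^ 2 + 2 * x1 * y1 - x1 ^ 2),
        (x2 + y2) ^ 2 / (y2 ^ 2 + 2 * x2 * y2 - x2 ^ 2)] := by
    rw [hft]
    apply Matrix.inv_eq_right_inv
    rw [Matrix.diagonal_mul_diagonal]
    ext i j
    fin_cases i <;> fin_cases j <;>
      simp [Matrix.diagonal_apply, Matrix.one_apply] <;> field_simp <;>
      exact div_self (by intro hc; first | exact hB1 (by linarith) | exact hB2 (by linarith))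
  -- mixed second derivatives
  have M000 : pdy 0 (pdx 0 (w 0)) p = -(4 * x1 * y1) / (x1 + y1) ^ 3 := by
    show deriv (fun t => pdx 0 (w 0) (x1, x2, t, y2)) y1 = _
    have : (fun t => pdx 0 (w 0) (x1, x2, t, y2))
        = fun t => deriv (fun s : ℝ => (s ^ 2 + t ^ 2) / (s + t)) x1 := by
      funext t
      show deriv (fun s => w 0 (s, x2, t, y2)) x1 = _
      simp [w]
    rw [this]
    exact hdd x1 y1 h1
  have M111 : pdy 1 (pdx 1 (w 1)) p = -(4 * x2 * y2) / (x2 + y2) ^ 3 := by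
    show deriv (fun t => pdx 1 (w 1) (x1, x2, y1, t)) y2 = _
    have : (fun t => pdx 1 (w 1) (x1, x2, y1, t))
        = fun t => deriv (fun s : ℝ => (s ^ 2 + t ^ 2) / (s + t)) x2 := by
      funext t
      show deriv (fun s => w 1 (x1, s, y1, t)) x2 = _
      simp [w]
    rw [this]
    exact hdd x2 y2 h2
  -- all other mixed second derivatives vanish
  have M001 : pdy 1 (pdx 0 (w 0)) p = 0 := by
    show deriv (fun t => pdx 0 (w 0) (x1, x2, y1, t)) y2 = 0
    simp [pdx, w]
  have M010 : pdy 0 (pdx 1 (w 0)) p = 0 := by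
    show deriv (fun t => pdx 1 (w 0) (x1, x2, t, y2)) y1 = 0
    simp [pdx, w]
  have M011 : pdy 1 (pdx 1 (w 0)) p = 0 := by
    show deriv (fun t => pdx 1 (w 0) (x1, x2, y1, t)) y2 = 0
    simp [pdx, w]
  have M100 : pdy 0 (pdx 0 (w 1)) p = 0 := by
    show deriv (fun t => pdx 0 (w 1) (x1, x2, t, y2)) y1 = 0
    simp [pdx, w]
  have M101 : pdy 1 (pdx 0 (w 1)) p = 0 := by
    show deriv (fun t => pdx 0 (w 1) (x1, x2, y1, t)) y2 = 0
    simp [pdx, w]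
  have M110 : pdy 0 (pdx 1 (w 1)) p = 0 := by
    show deriv (fun t => pdx 1 (w 1) (x1, x2, t, y2)) y1 = 0
    simp [pdx, w]
  -- Gamma values
  have G000 : Gam w 0 0 0 p = 4 * x1 * y1 * (x1 + y1)
      / ((x1 ^ 2 + 2 * x1 * y1 - y1 ^ 2) * (y1 ^ 2 + 2 * x1 * y1 - x1 ^ 2)) := by
    simp only [Gam, Fin.sum_univ_two, hfbinv, hftinv, M000, M001, M010, M011,
      Matrix.diagonal_apply_eq, Matrix.diagonal_apply_ne, Matrix.cons_val_zero,
      Matrix.cons_val_one, Matrix.head_cons, Matrix.diagonal_apply]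
    norm_num
    field_simp
  have G111 : Gam w 1 1 1 p = 4 * x2 * y2 * (x2 + y2)
      / ((x2 ^ 2 + 2 * x2 * y2 - y2 ^ 2) * (y2 ^ 2 + 2 * x2 * y2 - x2 ^ 2)) := by
    simp only [Gam, Fin.sum_univ_two, hfbinv, hftinv, M100, M101, M110, M111,
      Matrix.diagonal_apply_eq, Matrix.diagonal_apply_ne, Matrix.cons_val_zero,
      Matrix.cons_val_one, Matrix.head_cons, Matrix.diagonal_apply]
    norm_num
    field_simp
  have Z : ∀ i j k : Fin 2, (i, j, k) ≠ (0, 0, 0) → (i, j, k) ≠ (1, 1, 1) →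
      Gam w i j k p = 0 := by
    have tac : ∀ i j k : Fin 2, Gam w i j k p =
        - (pdy 0 (pdx 0 (w i)) p * (fbar w p)⁻¹ 0 j * (ftil w p)⁻¹ 0 k
          + pdy 1 (pdx 0 (w i)) p * (fbar w p)⁻¹ 0 j * (ftil w p)⁻¹ 1 k
          + (pdy 0 (pdx 1 (w i)) p * (fbar w p)⁻¹ 1 j * (ftil w p)⁻¹ 0 k
          + pdy 1 (pdx 1 (w i)) p * (fbar w p)⁻¹ 1 j * (ftil w p)⁻¹ 1 k)) := by
      intro i j k
      simp [Gam, Fin.sum_univ_two]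
    intro i j k hne1 hne2
    fin_cases i <;> fin_cases j <;> fin_cases k <;>
      first
      | exact absurd rfl hne1
      | exact absurd rfl hne2
      | (rw [tac]
         simp only [Fin.zero_eta, Fin.mk_one, hfbinv, hftinv, M000, M001, M010, M011, M100, M101, M110, M111,
           Matrix.diagonal_apply, Matrix.cons_val_zero, Matrix.cons_val_one,
           Matrix.head_cons]
         norm_num)
  have Gzero := Z
  refine ⟨hfb, hft, hub, hut, G000, G111, Gzero, ?_⟩
  intro i j k
  unfold tors
  rcases eq_or_ne j k with rfl | hjk
  · simp
  · have ne1 : (i, j, k) ≠ ((0 : Fin 2), (0 : Fin 2), (0 : Fin 2)) := fun h =>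
      hjk ((congrArg (fun q : Fin 2 × Fin 2 × Fin 2 => q.2.1) h).trans
        (congrArg (fun q : Fin 2 × Fin 2 × Fin 2 => q.2.2) h).symm)
    have ne2 : (i, j, k) ≠ ((1 : Fin 2), (1 : Fin 2), (1 : Fin 2)) := fun h =>
      hjk ((congrArg (fun q : Fin 2 × Fin 2 × Fin 2 => q.2.1) h).trans
        (congrArg (fun q : Fin 2 × Fin 2 × Fin 2 => q.2.2) h).symm)
    have ne1' : (i, k, j) ≠ ((0 : Fin 2), (0 : Fin 2), (0 : Fin 2)) := fun h =>
      hjk ((congrArg (fun q : Fin 2 × Fin 2 × Fin 2 => q.2.2) h).trans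
        (congrArg (fun q : Fin 2 × Fin 2 × Fin 2 => q.2.1) h).symm)
    have ne2' : (i, k, j) ≠ ((1 : Fin 2), (1 : Fin 2), (1 : Fin 2)) := fun h =>
      hjk ((congrArg (fun q : Fin 2 × Fin 2 × Fin 2 => q.2.2) h).trans
        (congrArg (fun q : Fin 2 × Fin 2 × Fin 2 => q.2.1) h).symm)
    rw [Gzero i j k ne1 ne2, Gzero i k j ne1' ne2']
    norm_num
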